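/- If T ⊆ ω^{<ω} has an infinite path (t_n)_{n∈ω} with t_n ∈ T_n, then the map g : G → G defined by g(a) = f_a({t_n}) for a ∈ G_n is a non-trivial automorphism of A(T) sending id_n to {t_n}. -/

import Mathlib

open scoped symmDiff

/-- `RankGE succ o x` means the tree rank of `x` (w.r.t. successor relation `succ`)
is at least `o`; unranked nodes (`rk = ∞`) satisfy this for every ordinal. -/
def RankGE {α : Type*} (succ : α → α → Prop) (o : Ordinal) (x : α) : Prop :=
  ∀ β < o, ∃ y, succ x y ∧ RankGE succ β y
termination_by o

/-- `T` is a subtree of `ω^{<ω}`: closed under initial segments. -/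
def IsTree (T : Set (List ℕ)) : Prop := ∀ s t : List ℕ, s <+: t → t ∈ T → s ∈ T

/-- `τ` is an immediate successor of `σ` in `T`. -/
def TSucc (T : Set (List ℕ)) (σ τ : List ℕ) : Prop := τ ∈ T ∧ ∃ k : ℕ, τ = σ ++ [k]

instance : Std.Commutative (α := Finset (List ℕ)) (· ∆ ·) := ⟨fun a b => symmDiff_comm a b⟩
instance : Std.Associative (α := Finset (List ℕ)) (· ∆ ·) := ⟨fun a b c => symmDiff_assoc a b c⟩

/-- The predecessor map: the symmetric-difference sum of the singletons of the
`T`-predecessors of the members of `a`. -/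
def pmap (a : Finset (List ℕ)) : Finset (List ℕ) :=
  Finset.fold (· ∆ ·) ∅ (fun t => {t.dropLast}) a

/-- The carrier `G = ⋃ₙ Gₙ`: an element of `Gₙ` is a pair `(n, a)` with `a` a finite
subset of the level-`n` nodes of `T`; `(n, ∅)` is the identity `idₙ` of `Gₙ`. -/
def Gset (T : Set (List ℕ)) : Set (ℕ × Finset (List ℕ)) :=
  {x | ∀ t ∈ x.2, t ∈ T ∧ t.length = x.1}

/-- The operations `f_a`: `fA a b = a* ∆ b*` where `a*`, `b*` are the iterated
predecessors of `a`, `b` down to the minimum of their levels. -/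
def fA (x y : ℕ × Finset (List ℕ)) : ℕ × Finset (List ℕ) :=
  (min x.1 y.1, (pmap^[x.1 - min x.1 y.1] x.2) ∆ (pmap^[y.1 - min x.1 y.1] y.2))

/-- An automorphism of the structure `A(T) = (G, (f_a)_{a ∈ G})`: a bijection of `G`
commuting with each of the named unary operations `f_a`. -/
def IsAuto (T : Set (List ℕ)) (g : ℕ × Finset (List ℕ) → ℕ × Finset (List ℕ)) : Prop :=
  Set.BijOn g (Gset T) (Gset T) ∧ ∀ a ∈ Gset T, ∀ b ∈ Gset T, g (fA a b) = fA a (g b)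


lemma symmDiff_insert_not_mem (a b : Finset (List ℕ)) (x : List ℕ) (hxa : x ∉ a) (hxb : x ∉ b) :
    a ∆ insert x b = insert x (a ∆ b) := by
  ext t
  simp only [Finset.mem_symmDiff, Finset.mem_insert]
  constructor
  · rintro (⟨h1, h2⟩ | ⟨h1 | h1, h2⟩)
    · exact Or.inr (Or.inl ⟨h1, fun hb => h2 (Or.inr hb)⟩)
    · exact Or.inl h1
    · exact Or.inr (Or.inr ⟨h1, h2⟩)
  · rintro (rfl | ⟨h1, h2⟩ | ⟨h1, h2⟩)
    · exact Or.inr ⟨Or.inl rfl, hxa⟩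
    · exact Or.inl ⟨h1, fun h => h.elim (fun h => hxa (h ▸ h1)) h2⟩
    · exact Or.inr ⟨Or.inr h1, h2⟩

lemma symmDiff_insert_mem (a b : Finset (List ℕ)) (x : List ℕ) (hxa : x ∈ a) (hxb : x ∉ b) :
    a ∆ insert x b = (a.erase x) ∆ b := by
  ext t
  simp only [Finset.mem_symmDiff, Finset.mem_insert, Finset.mem_erase]
  constructor
  · rintro (⟨h1, h2⟩ | ⟨h1 | h1, h2⟩)
    · exact Or.inl ⟨⟨fun h => h2 (Or.inl h), h1⟩, fun hb => h2 (Or.inr hb)⟩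
    · exact absurd (h1 ▸ hxa) h2
    · exact Or.inr ⟨h1, fun ⟨_, h⟩ => h2 h⟩
  · rintro (⟨⟨h1, h2⟩, h3⟩ | ⟨h1, h2⟩)
    · exact Or.inl ⟨h2, fun h => h.elim (fun h => h1 h) h3⟩
    · by_cases hx : t = x
      · exact absurd (hx ▸ h1) hxb
      · exact Or.inr ⟨Or.inr h1, fun h => h2 ⟨hx, h⟩⟩

lemma pmap_insert (x : List ℕ) (b : Finset (List ℕ)) (hxb : x ∉ b) :
    pmap (insert x b) = {x.dropLast} ∆ pmap b := by
  unfold pmap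
  rw [Finset.fold_insert hxb]

lemma pmap_symmDiff (b : Finset (List ℕ)) :
    ∀ a : Finset (List ℕ), pmap (a ∆ b) = pmap a ∆ pmap b := by
  induction b using Finset.induction_on with
  | empty =>
    intro a
    have h : ∀ c : Finset (List ℕ), c ∆ ∅ = c := fun c => by
      rw [← Finset.bot_eq_empty, symmDiff_bot]
    rw [h a, show pmap (∅ : Finset (List ℕ)) = ∅ from rfl, h (pmap a)]
  | insert _ _ hxb ih =>
    rename_i x b
    intro a
    rw [pmap_insert x b hxb]
    by_cases hxa : x ∈ a
    · rw [symmDiff_insert_mem a b x hxa hxb, ih]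
      have ha : pmap a = {x.dropLast} ∆ pmap (a.erase x) := by
        conv_lhs => rw [(Finset.insert_erase hxa).symm]
        rw [pmap_insert x _ (Finset.notMem_erase x a)]
      rw [ha]
      generalize pmap (a.erase x) = A
      generalize pmap b = B
      generalize ({x.dropLast} : Finset (List ℕ)) = C
      rw [symmDiff_assoc C A (C ∆ B), ← symmDiff_assoc A C B, symmDiff_comm A C,
        symmDiff_assoc C A B, ← symmDiff_assoc C C (A ∆ B), symmDiff_self, bot_symmDiff]
    · rw [symmDiff_insert_not_mem a b x hxa hxb,
        pmap_insert x _ (by simp [Finset.mem_symmDiff, hxa, hxb]), ih]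
      generalize pmap a = A
      generalize pmap b = B
      rw [← symmDiff_assoc, symmDiff_comm _ A, symmDiff_assoc]

lemma pmap_iter_symmDiff (j : ℕ) (a b : Finset (List ℕ)) :
    pmap^[j] (a ∆ b) = pmap^[j] a ∆ pmap^[j] b := by
  induction j generalizing a b with
  | zero => rfl
  | succ j ih => rw [Function.iterate_succ_apply, Function.iterate_succ_apply,
      Function.iterate_succ_apply, pmap_symmDiff _ _, ih]

lemma pmap_singleton (t : List ℕ) : pmap {t} = {t.dropLast} := by
  simp [pmap]

lemma dropLast_ofFn (f : ℕ → ℕ) (n : ℕ) :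
    (List.ofFn (fun i : Fin (n+1) => f i)).dropLast = List.ofFn (fun i : Fin n => f i) := by
  rw [List.ofFn_succ' (fun i : Fin (n+1) => f i)]
  simp [List.concat_eq_append]

lemma pmap_iter_path (f : ℕ → ℕ) (j k : ℕ) :
    pmap^[j] {List.ofFn (fun i : Fin (k + j) => f i)} = {List.ofFn (fun i : Fin k => f i)} := by
  induction j with
  | zero => rfl
  | succ j ih =>
    rw [Function.iterate_succ_apply, show k + (j+1) = (k+j)+1 from rfl, pmap_singleton,
      dropLast_ofFn, ih]

theorem stmt_9 (T : Set (List ℕ)) (hT : IsTree T) (f : ℕ → ℕ)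
    (hf : ∀ n, List.ofFn (fun i : Fin n => f i) ∈ T)
    (g : ℕ × Finset (List ℕ) → ℕ × Finset (List ℕ))
    (hg : ∀ x, g x = fA x (x.1, {List.ofFn (fun i : Fin x.1 => f i)})) :
    IsAuto T g ∧ (∀ n : ℕ, g (n, ∅) = (n, {List.ofFn (fun i : Fin n => f i)})) ∧
      ∃ x ∈ Gset T, g x ≠ x := by
  have gval : ∀ x : ℕ × Finset (List ℕ),
      g x = (x.1, x.2 ∆ {List.ofFn (fun i : Fin x.1 => f i)}) := by
    intro x
    rw [hg x]
    simp [fA]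
  have hmem : ∀ x ∈ Gset T, g x ∈ Gset T := by
    intro x hx
    rw [gval x]
    intro t ht
    rw [Finset.mem_symmDiff] at ht
    rcases ht with ⟨h1, _⟩ | ⟨h1, _⟩
    · exact hx t h1
    · rw [Finset.mem_singleton] at h1
      subst h1
      exact ⟨hf x.1, by simp⟩
  have hinv : ∀ x : ℕ × Finset (List ℕ), g (g x) = x := by
    intro x
    rw [gval x, gval]
    simp [symmDiff_assoc]
  refine ⟨⟨⟨hmem, ?_, ?_⟩, ?_⟩, ?_, ?_⟩
  · intro x _ y _ hxy
    rw [← hinv x, ← hinv y, hxy]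
  · intro y hy
    exact ⟨g y, hmem y hy, hinv y⟩
  · intro a _ b _
    rw [gval, gval]
    simp only [fA]
    have hk : min a.1 b.1 ≤ b.1 := min_le_right _ _
    have key : pmap^[b.1 - min a.1 b.1] {List.ofFn (fun i : Fin b.1 => f i)}
        = {List.ofFn (fun i : Fin (min a.1 b.1) => f i)} := by
      have := pmap_iter_path f (b.1 - min a.1 b.1) (min a.1 b.1)
      rwa [Nat.add_sub_cancel' hk] at this
    simp only [min_self, Nat.sub_self, Function.iterate_zero, id_eq, Prod.mk.injEq,
      true_and, pmap_iter_symmDiff, key]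
    exact symmDiff_assoc _ _ _
  · intro n
    rw [gval]
    simp
  · refine ⟨(0, ∅), fun t ht => absurd ht (Finset.notMem_empty t), ?_⟩
    rw [gval]
    simp
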